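/- Let c, d satisfy c(1) = d(1) = 1, d(n) = 2ε₁·d(n-1), c(n) = (1-ε₂)·c(n-1) + ε₁·d(n-1) for n ≥ 2, with 0 ≤ ε₁ < 1/2 and 0 ≤ ε₂ ≤ 1. Then for all n ≥ 2, c(n) ≤ 1 + ε₁·(1 - (2ε₁)^{n-1})/(1 - 2ε₁). -/

import Mathlib

theorem stmt_9 (ε₁ ε₂ : ℝ) (c d : ℕ → ℝ)
    (hε₁0 : 0 ≤ ε₁) (hε₁h : ε₁ < 1/2) (hε₂0 : 0 ≤ ε₂) (hε₂1 : ε₂ ≤ 1)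
    (hc1 : c 1 = 1) (hd1 : d 1 = 1)
    (hdrec : ∀ n : ℕ, 2 ≤ n → d n = 2 * ε₁ * d (n - 1))
    (hcrec : ∀ n : ℕ, 2 ≤ n → c n = (1 - ε₂) * c (n - 1) + ε₁ * d (n - 1)) :
    ∀ n : ℕ, 2 ≤ n → c n ≤ 1 + ε₁ * (1 - (2 * ε₁) ^ (n - 1)) / (1 - 2 * ε₁) := by
  have hx : (0:ℝ) < 1 - 2 * ε₁ := by linarith
  have hd : ∀ n : ℕ, 1 ≤ n → d n = (2 * ε₁) ^ (n - 1) := by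
    intro n hn
    induction n with
    | zero => omega
    | succ m ih =>
      rcases Nat.lt_or_ge m 1 with hm | hm
      · interval_cases m
        · simpa using hd1
      · have h2 : 2 ≤ m + 1 := by omega
        rw [hdrec (m+1) h2]
        simp only [Nat.add_sub_cancel]
        rw [ih hm]
        conv_rhs => rw [show m = m - 1 + 1 from by omega, pow_succ]
        ring
  have hc0 : ∀ n : ℕ, 1 ≤ n → 0 ≤ c n := by
    intro n hn
    induction n with
    | zero => omega
    | succ m ih =>
      rcases Nat.lt_or_ge m 1 with hm | hm
      · interval_cases m
        · simp [hc1]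
      · have h2 : 2 ≤ m + 1 := by omega
        rw [hcrec (m+1) h2]
        simp only [Nat.add_sub_cancel]
        have hdm : 0 ≤ d m := by
          rw [hd m hm]; positivity
        have := ih hm
        nlinarith
  intro n hn
  induction n, hn using Nat.le_induction with
  | base =>
    rw [hcrec 2 (le_refl 2)]
    norm_num [hc1, hd1]
    rw [mul_div_assoc, div_self hx.ne', mul_one]
    linarith
  | succ m hm ih =>
    have h2 : 2 ≤ m + 1 := by omega
    rw [hcrec (m+1) h2]
    simp only [Nat.add_sub_cancel]
    have hdm : d m = (2 * ε₁) ^ (m - 1) := hd m (by omega)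
    have hcm0 : 0 ≤ c m := hc0 m (by omega)
    have key : (1 - ε₂) * c m + ε₁ * d m ≤
        (1 + ε₁ * (1 - (2 * ε₁) ^ (m - 1)) / (1 - 2 * ε₁)) + ε₁ * (2 * ε₁) ^ (m - 1) := by
      rw [hdm]
      have : (1 - ε₂) * c m ≤ c m := by nlinarith
      linarith
    refine key.trans (le_of_eq ?_)
    have hm1 : m - 1 + 1 = m := by omega
    have hpow : (2 * ε₁) ^ m = (2 * ε₁) ^ (m - 1) * (2 * ε₁) := by
      rw [← pow_succ, hm1]
    field_simp
    rw [mul_comm ε₁ 2, hpow]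
    field_simp [show (1:ℝ) - ε₁ * 2 ≠ 0 by linarith]
    ring
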